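/- For all real x with 0 < x < 1, (log x)² − ((x² − 1)/2 − log x) = (1 − x)² · Σ_{k≥1} (Σ_{ℓ=1}^{k+1} 1/(ℓ(k+2−ℓ)) − 1/(k+2)) (1 − x)^k. -/

import Mathlib

theorem stmt13 (x : ℝ) (hx0 : 0 < x) (hx1 : x < 1) :
    (Real.log x) ^ 2 - ((x ^ 2 - 1) / 2 - Real.log x) =
      (1 - x) ^ 2 *
        ∑' k : ℕ,
          ((∑ l ∈ Finset.Icc 1 (k + 2), (1 : ℝ) / ((l : ℝ) * ((k + 3 - l : ℕ) : ℝ))) -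
              1 / ((k : ℝ) + 3)) * (1 - x) ^ (k + 1) := by
  set t : ℝ := 1 - x with htdef
  have ht0 : 0 < t := by simp only [htdef]; linarith
  have ht1 : t < 1 := by simp only [htdef]; linarith
  have habs : |t| < 1 := by rw [abs_of_pos ht0]; exact ht1
  set a : ℕ → ℝ := fun n => t ^ (n + 1) / (n + 1) with ha
  have hlog : HasSum a (-Real.log x) := by
    have := Real.hasSum_pow_div_log_of_abs_lt_one habs
    have hx : 1 - t = x := by rw [htdef]; ring
    rwa [hx] at this
  have hnorm : Summable fun n => ‖a n‖ := by
    refine Summable.of_nonneg_of_le (fun n => norm_nonneg _) (fun n => ?_)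
      (summable_geometric_of_lt_one (le_of_lt ht0) ht1)
    rw [ha, Real.norm_eq_abs, abs_div, abs_of_pos (pow_pos ht0 _),
      abs_of_pos (by positivity : (0:ℝ) < (n:ℝ) + 1)]
    calc t ^ (n + 1) / ((n : ℝ) + 1) ≤ t ^ (n + 1) / 1 := by
          apply div_le_div_of_nonneg_left (by positivity) one_pos; simp
      _ = t ^ n * t := by rw [div_one, pow_succ]
      _ ≤ t ^ n * 1 := by nlinarith [pow_pos ht0 n]
      _ = t ^ n := mul_one _
  set F : ℕ → ℝ := fun n => ∑ k ∈ Finset.range (n + 1), a k * a (n - k) with hF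
  have hC : HasSum F ((Real.log x) ^ 2) := by
    have := hasSum_sum_range_mul_of_summable_norm hnorm hnorm
    rwa [hlog.tsum_eq, neg_mul_neg, ← sq] at this
  have hA : HasSum (fun k => F (k + 1)) ((Real.log x) ^ 2 - t ^ 2) := by
    have h := (hasSum_nat_add_iff' (f := F) 1).mpr hC
    have h0 : ∑ i ∈ Finset.range 1, F i = t ^ 2 := by
      simp [hF, ha]; ring
    rwa [h0] at h
  have hB : HasSum (fun k => a (k + 2)) (-Real.log x - (t + t ^ 2 / 2)) := by
    have h := (hasSum_nat_add_iff' (f := a) 2).mpr hlog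
    have hs : ∑ i ∈ Finset.range 2, a i = t + t ^ 2 / 2 := by
      simp [ha, Finset.sum_range_succ]; ring
    rwa [hs] at h
  have key := hA.sub hB
  have hterm : (fun k : ℕ => F (k + 1) - a (k + 2)) = fun k : ℕ =>
      ((∑ l ∈ Finset.Icc 1 (k + 2), (1 : ℝ) / ((l : ℝ) * ((k + 3 - l : ℕ) : ℝ))) -
        1 / ((k : ℝ) + 3)) * t ^ (k + 3) := by
    funext k
    have h1 : F (k + 1) = (∑ l ∈ Finset.Icc 1 (k + 2),
        (1 : ℝ) / ((l : ℝ) * ((k + 3 - l : ℕ) : ℝ))) * t ^ (k + 3) := by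
      rw [hF, ← Finset.Ico_add_one_right_eq_Icc, Finset.sum_Ico_eq_sum_range]
      simp only [Nat.succ_sub_one]
      rw [Finset.sum_mul]
      apply Finset.sum_congr (by norm_num) ?_
      intro i hi
      rw [Finset.mem_range] at hi
      have hi' : i ≤ k + 1 := by omega
      have h3 : k + 2 + 1 - (1 + i) = k + 2 - i := by omega
      rw [ha]
      simp only [h3]
      have hc : ((k + 2 - i : ℕ) : ℝ) = (k : ℝ) + 2 - i := by
        push_cast [Nat.cast_sub (by omega : i ≤ k + 2)]; ring
      have hpow : t ^ (i + 1) * t ^ (k + 1 - i + 1) = t ^ (k + 3) := by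
        rw [← pow_add]; congr 1; omega
      have hcast : ((k + 1 - i : ℕ) : ℝ) + 1 = (k : ℝ) + 2 - i := by
        push_cast [Nat.cast_sub (by omega : i ≤ k + 1)]; ring
      rw [div_mul_div_comm, hpow, hcast, hc]
      push_cast
      rw [div_mul_eq_mul_div, one_mul]
      congr 1
      ring
    have h2 : a (k + 2) = (1 / ((k : ℝ) + 3)) * t ^ (k + 3) := by
      rw [ha]
      push_cast
      rw [one_div, div_eq_inv_mul]
      ring_nf
    rw [h1, h2]
    ring
  rw [hterm] at key
  have hR : t ^ 2 * (∑' k : ℕ,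
      ((∑ l ∈ Finset.Icc 1 (k + 2), (1 : ℝ) / ((l : ℝ) * ((k + 3 - l : ℕ) : ℝ))) -
        1 / ((k : ℝ) + 3)) * t ^ (k + 1)) = ∑' k : ℕ,
      ((∑ l ∈ Finset.Icc 1 (k + 2), (1 : ℝ) / ((l : ℝ) * ((k + 3 - l : ℕ) : ℝ))) -
        1 / ((k : ℝ) + 3)) * t ^ (k + 3) := by
    rw [← tsum_mul_left]
    apply tsum_congr
    intro k
    ring
  rw [hR, key.tsum_eq, htdef]
  ring
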